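/- arXiv:2505.15573 — 3 statements merged into one kernel-verified Lean document; each statement's English description precedes it below -/
import Mathlib

section
/- Let F ⊆ L be fields, let t₁,…,tₘ ∈ L be algebraically independent over F, and suppose L = F(t₁,…,tₘ)(α) where α is algebraic of degree n over F(t₁,…,tₘ). Then the relative algebraic closure of F in L (the subfield of elements of L algebraic over F) has degree at most n over F. -/
open MvPolynomial

section Aux

variable {F L : Type*} [Field F] [Field L] [Algebra F L]

noncomputable instance auxAlg (S : Set L) :
    Algebra (Algebra.adjoin F S) (IntermediateField.adjoin F S) :=
  (Subalgebra.inclusion (IntermediateField.algebra_adjoin_le_adjoin F S)).toAlgebra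

instance auxTower (S : Set L) :
    IsScalarTower (Algebra.adjoin F S) (IntermediateField.adjoin F S) L :=
  IsScalarTower.of_algebraMap_eq fun _ ↦ rfl

theorem aux_aeval_mem (S : Set L) (p : MvPolynomial S F) :
    MvPolynomial.aeval (Subtype.val : S → L) p ∈ Algebra.adjoin F S := by
  have h : Algebra.adjoin F S = Algebra.adjoin F (Set.range (Subtype.val : S → L)) := by
    rw [Subtype.range_coe]
  rw [h, Algebra.adjoin_range_eq_range_aeval]
  exact ⟨p, rfl⟩

theorem aux_coe_algebraMap (S : Set L) (y : Algebra.adjoin F S) :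
    ((algebraMap (Algebra.adjoin F S) (IntermediateField.adjoin F S) y : IntermediateField.adjoin F S) : L) = (y : L) :=
  rfl

instance auxFR (S : Set L) :
    IsFractionRing (Algebra.adjoin F S) (IntermediateField.adjoin F S) := by
  refine (isLocalization_iff _ _).mpr ⟨?_, ?_, ?_⟩
  · rintro ⟨y, hy⟩
    rw [isUnit_iff_ne_zero]
    intro h
    refine mem_nonZeroDivisors_iff_ne_zero.mp hy (Subtype.ext ?_)
    have := congrArg (fun z : IntermediateField.adjoin F S => (z : L)) h
    simpa [aux_coe_algebraMap] using this
  · intro z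
    have hz := z.2
    rw [IntermediateField.mem_adjoin_iff] at hz
    obtain ⟨r, s, hrs⟩ := hz
    by_cases hs : MvPolynomial.aeval (Subtype.val : S → L) s = 0
    · refine ⟨⟨0, 1⟩, ?_⟩
      have hz0 : (z : L) = 0 := by rw [hrs, hs, div_zero]
      have : z = 0 := Subtype.ext hz0
      simp [this]
    · refine ⟨⟨⟨_, aux_aeval_mem S r⟩, ⟨⟨_, aux_aeval_mem S s⟩,
        mem_nonZeroDivisors_iff_ne_zero.mpr (fun h => hs (congrArg Subtype.val h))⟩⟩, ?_⟩
      apply Subtype.ext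
      show (z : L) * _ = _
      rw [aux_coe_algebraMap, aux_coe_algebraMap]
      show (z : L) * MvPolynomial.aeval (Subtype.val : S → L) s = MvPolynomial.aeval (Subtype.val : S → L) r
      rw [hrs, div_mul_cancel₀ _ hs]
  · intro a b h
    refine ⟨1, ?_⟩
    have : (a : L) = (b : L) := congrArg (fun z : IntermediateField.adjoin F S => (z : L)) h
    simp [Subtype.ext this]


theorem aux_isAlgebraic_iff {S : Set L} {a : L} :
    IsAlgebraic (IntermediateField.adjoin F S) a ↔ IsAlgebraic (Algebra.adjoin F S) a :=
  (IsFractionRing.isAlgebraic_iff (Algebra.adjoin F S) (IntermediateField.adjoin F S) L).symm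

theorem aux_transcendental {σ : Type*} {x : σ → L} (hx : AlgebraicIndependent F x)
    {i : σ} {s : Set σ} (his : i ∉ s) :
    Transcendental (IntermediateField.adjoin F (x '' s)) (x i) := by
  intro halg
  rw [aux_isAlgebraic_iff] at halg
  have hxs : AlgebraicIndependent F (fun j : s => x j) :=
    hx.comp Subtype.val Subtype.val_injective
  have hinj : Function.Injective (fun o : Option s => o.elim i Subtype.val) := by
    rintro (_ | a) (_ | b) h
    · rfl
    · have h' : i = (b : σ) := h
      exact absurd (h' ▸ b.2) his
    · have h' : (a : σ) = i := h
      exact absurd (h' ▸ a.2) his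
    · have h' : (a : σ) = (b : σ) := h
      exact congrArg _ (Subtype.ext h')
  have hopt : AlgebraicIndependent F (fun o : Option s => o.elim (x i) fun j : s => x j) := by
    have h2 := hx.comp _ hinj
    have hfun : (x ∘ fun o : Option s => o.elim i Subtype.val)
        = fun o : Option s => o.elim (x i) fun j : s => x j := by
      funext o; cases o <;> rfl
    exact hfun ▸ h2
  have := (AlgebraicIndependent.option_iff.mp hopt).2
  rw [Set.image_eq_range] at halg
  exact this halg

set_option synthInstance.maxHeartbeats 1000000 in
set_option maxHeartbeats 1000000 in
theorem aux_algIndep {σ : Type*} (x : σ → L) (hx : AlgebraicIndependent F x)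
    (E : IntermediateField F L) [Algebra.IsAlgebraic F E] :
    AlgebraicIndependent E x := by
  refine algebraicIndependent_of_finite_type'
    (algebraMap (E : IntermediateField F L) L).injective ?_
  intro s hs _ i his
  intro halg
  set N := IntermediateField.adjoin F (x '' s) with hN
  apply aux_transcendental hx his
  -- every element of Algebra.adjoin ↥E (x '' s) lies in algebraicClosure N L
  have hsub : ∀ u ∈ Algebra.adjoin (E : IntermediateField F L) (x '' s),
      u ∈ algebraicClosure N L := by
    intro u hu
    induction hu using Algebra.adjoin_induction with
    | mem v hv =>
      have hvN : v ∈ N := IntermediateField.subset_adjoin F _ hv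
      exact mem_algebraicClosure_iff'.2
        (isIntegral_algebraMap (R := N) (x := ⟨v, hvN⟩))
    | algebraMap e =>
      have he : IsIntegral F (e : L) :=
        ((Algebra.IsAlgebraic.isAlgebraic (R := F) e).isIntegral).map
          (IsScalarTower.toAlgHom F E L)
      exact mem_algebraicClosure_iff'.2 he.tower_top
    | add _ _ _ _ h1 h2 => exact add_mem h1 h2
    | mul _ _ _ _ h1 h2 => exact mul_mem h1 h2
  letI : Algebra (Algebra.adjoin (E : IntermediateField F L) (x '' s)) (algebraicClosure N L) :=
    RingHom.toAlgebra
      { toFun := fun r => ⟨(r : L), hsub r r.2⟩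
        map_one' := rfl
        map_mul' := fun _ _ => rfl
        map_zero' := rfl
        map_add' := fun _ _ => rfl }
  haveI : IsScalarTower (Algebra.adjoin (E : IntermediateField F L) (x '' s))
      (algebraicClosure N L) L := IsScalarTower.of_algebraMap_eq fun _ => rfl
  have hinj2 : Function.Injective (algebraMap
      (Algebra.adjoin (E : IntermediateField F L) (x '' s)) (algebraicClosure N L)) :=
    fun a b h => Subtype.ext (show (a : L) = (b : L) from congrArg (Subtype.val : (algebraicClosure N L) → L) h)
  have h3 : IsAlgebraic (algebraicClosure N L) (x i) := halg.extendScalars hinj2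
  haveI : Algebra.IsIntegral N (algebraicClosure N L) :=
    Algebra.isAlgebraic_iff_isIntegral.mp inferInstance
  exact (isIntegral_trans (x i) (isAlgebraic_iff_isIntegral.mp h3)).isAlgebraic

theorem aux_li {σ ι : Type*} {x : σ → L} {A : IntermediateField F L}
    (hAx : AlgebraicIndependent (A : IntermediateField F L) x) {v : ι → A}
    (hv : LinearIndependent F v) :
    LinearIndependent (Algebra.adjoin F (Set.range x)) (fun i => (v i : L)) := by
  have hx : AlgebraicIndependent F x := hAx.restrictScalars (algebraMap F A).injective
  rw [linearIndependent_iff']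
  intro s g hg i hi
  set q : MvPolynomial σ A :=
    ∑ j ∈ s, MvPolynomial.C (v j) * (MvPolynomial.map (algebraMap F A) (hx.repr (g j))) with hqdef
  have hq : MvPolynomial.aeval x q = 0 := by
    rw [hqdef, map_sum]
    have hterm : ∀ j ∈ s,
        MvPolynomial.aeval x (MvPolynomial.C (v j) *
          (MvPolynomial.map (algebraMap F A) (hx.repr (g j)))) = g j • (v j : L) := by
      intro j _
      rw [map_mul, MvPolynomial.aeval_C, MvPolynomial.aeval_map_algebraMap, hx.aeval_repr]
      rw [Algebra.smul_def, mul_comm]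
      rfl
    rw [Finset.sum_congr rfl hterm, hg]
  have hq0 : q = 0 := algebraicIndependent_iff.mp hAx q hq
  have hc : ∀ d, ∑ j ∈ s, ((hx.repr (g j)).coeff d) • v j = 0 := by
    intro d
    have hcd := congrArg (MvPolynomial.coeff d) hq0
    rw [hqdef, MvPolynomial.coeff_sum, MvPolynomial.coeff_zero] at hcd
    simp only [MvPolynomial.coeff_C_mul, MvPolynomial.coeff_map] at hcd
    simpa [Algebra.smul_def, mul_comm] using hcd
  have h5 : hx.repr (g i) = 0 := by
    apply MvPolynomial.ext
    intro d
    rw [MvPolynomial.coeff_zero]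
    exact linearIndependent_iff'.mp hv s (fun j => (hx.repr (g j)).coeff d) (hc d) i hi
  have h6 : (g i : L) = 0 := by
    rw [← hx.aeval_repr (g i), h5, map_zero]
  exact Subtype.ext h6

theorem aux_li_field {S : Set L} {ι : Type*} {w : ι → L}
    (h : LinearIndependent (Algebra.adjoin F S) w) :
    LinearIndependent (IntermediateField.adjoin F S) w :=
  h.localization (IntermediateField.adjoin F S) (nonZeroDivisors _)

end Aux

/-- If `F ⊆ L` are fields, `t₁, …, tₘ ∈ L` are algebraically independent over `F`, and
`L = F(t₁,…,tₘ)(α)` with `α` algebraic of degree `n` over `F(t₁,…,tₘ)`, then the relative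
algebraic closure of `F` in `L` has degree at most `n` over `F`. -/
theorem stmt0 {F L : Type*} [Field F] [Field L] [Algebra F L]
    {m n : ℕ} (t : Fin m → L) (ht : AlgebraicIndependent F t)
    (α : L)
    (hint : IsIntegral (IntermediateField.adjoin F (Set.range t)) α)
    (hdeg : (minpoly (IntermediateField.adjoin F (Set.range t)) α).natDegree = n)
    (htop : IntermediateField.adjoin (IntermediateField.adjoin F (Set.range t)) {α} = ⊤) :
    Module.rank F (integralClosure F L) ≤ n := by
  classical
  set K := IntermediateField.adjoin F (Set.range t) with hK
  haveI hfd : FiniteDimensional K (IntermediateField.adjoin K {α}) :=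
    IntermediateField.adjoin.finiteDimensional hint
  let e : (IntermediateField.adjoin K {α} : IntermediateField K L) ≃ₗ[K] L :=
    ((IntermediateField.equivOfEq htop).trans IntermediateField.topEquiv).toLinearEquiv
  haveI : FiniteDimensional K L := Module.Finite.equiv e
  have hfr : Module.finrank K L = n := by
    rw [← hdeg, ← IntermediateField.adjoin.finrank hint]
    exact e.finrank_eq.symm
  set A := algebraicClosure F L with hA
  have hAt : AlgebraicIndependent (A : IntermediateField F L) t := aux_algIndep t ht A
  let b := Module.Basis.ofVectorSpace F A
  have h1 : LinearIndependent (Algebra.adjoin F (Set.range t)) (fun i => (b i : L)) :=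
    aux_li hAt b.linearIndependent
  have h2 : LinearIndependent K (fun i => (b i : L)) := aux_li_field h1
  have h3 : Cardinal.mk (Module.Basis.ofVectorSpaceIndex F A) ≤ Module.rank K L :=
    h2.cardinal_le_rank
  have h4 : Module.rank K L = n := by
    rw [← hfr]; exact (Module.finrank_eq_rank _ _).symm
  have h5 : Module.rank F A = Cardinal.mk (Module.Basis.ofVectorSpaceIndex F A) :=
    (Module.Basis.mk_eq_rank'' b).symm
  have h6 : Module.rank F (integralClosure F L) = Module.rank F A := rfl
  rw [h6, h5]
  exact h3.trans_eq h4
end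

section
/- Let Ω be a field, K ⊆ L and K ⊆ K′ subfields of Ω with L/K a finite Galois extension. If L and K′ are linearly disjoint over K, then the composite field LK′ is a finite Galois extension of K′ of the same degree, [LK′ : K′] = [L : K], and the restriction map Gal(LK′/K′) → Gal(L/K) is a group isomorphism. -/
set_option maxHeartbeats 1000000
set_option synthInstance.maxHeartbeats 400000

/-- If `L/K` is a finite Galois extension inside `Ω` and `K'` is another intermediate field
of `Ω/K` linearly disjoint from `L` over `K`, then the compositum `LK'` is a finite Galois
extension of `K'` of the same degree, and restriction gives a group isomorphism
`Gal(LK'/K') ≃ Gal(L/K)`. -/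
theorem stmt4 {K Ω : Type*} [Field K] [Field Ω] [Algebra K Ω]
    (L K' : IntermediateField K Ω) [IsGalois K L] [FiniteDimensional K L]
    (hdisj : L.LinearDisjoint K') :
    let M := IntermediateField.adjoin K' ((L : Set Ω))
    IsGalois K' M ∧ FiniteDimensional K' M ∧
    Module.finrank K' M = Module.finrank K L ∧
    ∃ φ : (M ≃ₐ[K'] M) ≃* (L ≃ₐ[K] L),
      ∀ (σ : M ≃ₐ[K'] M) (x : L),
        ((φ σ x : L) : Ω) =
          (σ ⟨(x : Ω), IntermediateField.subset_adjoin K' (L : Set Ω) x.2⟩ : Ω) := by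
  intro M
  classical
  -- `M` is a Galois extension of `K'`: it is the splitting field of a separable polynomial
  obtain ⟨p, hpsep, hpsf⟩ := IsGalois.is_separable_splitting_field K L
  have hsplitsΩ : (p.map (algebraMap K Ω)).Splits := by
    have h := hpsf.splits
    rw [IsScalarTower.algebraMap_eq K L Ω]
    rw [← Polynomial.map_map]
    exact h.map _
  have hsplits' : ((p.map (algebraMap K K')).map (algebraMap K' Ω)).Splits := by
    rw [Polynomial.map_map, ← IsScalarTower.algebraMap_eq]
    exact hsplitsΩ
  have hroot : (p.map (algebraMap K K')).rootSet Ω = p.rootSet Ω := by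
    unfold Polynomial.rootSet
    rw [Polynomial.aroots_map]
  have hL : L = IntermediateField.adjoin K (p.rootSet Ω) :=
    (IntermediateField.isSplittingField_iff.mp hpsf).2
  have hM : M = IntermediateField.adjoin K' ((p.map (algebraMap K K')).rootSet Ω) := by
    rw [hroot]
    apply le_antisymm
    · rw [IntermediateField.adjoin_le_iff]
      intro x hx
      rw [show (L : Set Ω) = ((IntermediateField.adjoin K (p.rootSet Ω) : IntermediateField K Ω) : Set Ω) from congrArg _ hL] at hx
      induction hx using IntermediateField.adjoin_induction with
      | mem y hy => exact IntermediateField.subset_adjoin _ _ hy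
      | algebraMap c =>
        rw [IsScalarTower.algebraMap_apply K K' Ω]
        exact IntermediateField.algebraMap_mem _ _
      | add a c _ _ ha hc => exact add_mem ha hc
      | inv a _ ha => exact inv_mem ha
      | mul a c _ _ ha hc => exact mul_mem ha hc
    · rw [IntermediateField.adjoin_le_iff]
      intro x hx
      apply IntermediateField.subset_adjoin
      rw [hL]
      exact IntermediateField.subset_adjoin _ _ hx
  have hsf : (p.map (algebraMap K K')).IsSplittingField K' M := by
    rw [hM]
    exact IntermediateField.adjoin_rootSet_isSplittingField hsplits'
  haveI : IsGalois K' M := by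
    haveI := hsf
    exact IsGalois.of_separable_splitting_field (hpsep.map (f := algebraMap K K'))
  -- basis of `M` over `K'` coming from a basis of `L` over `K`
  set n := Module.finrank K L with hn
  let b : Module.Basis (Fin n) K L := Module.finBasis K L
  have hbli : LinearIndependent K' (L.val ∘ b) :=
    hdisj.symm.linearIndependent_right b.linearIndependent
  let m : Fin n → M := fun i => ⟨(b i : Ω), IntermediateField.subset_adjoin K' (L : Set Ω) (b i).2⟩
  have hmli : LinearIndependent K' m := by
    apply LinearIndependent.of_comp (M.val.toLinearMap)
    exact hbli
  have hspanL : ∀ x : Ω, x ∈ L → x ∈ Submodule.span K' (Set.range (L.val ∘ b)) := by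
    intro x hx
    have hx' : (⟨x, hx⟩ : L) ∈ Submodule.span K (Set.range b) := by
      rw [b.span_eq]; trivial
    have h2 := Submodule.mem_map_of_mem (f := L.val.toLinearMap) hx'
    rw [Submodule.map_span, ← Set.range_comp] at h2
    exact Submodule.span_le_restrictScalars K K' _ h2
  have hspanM : ⊤ ≤ Submodule.span K' (Set.range m) := by
    intro y _
    have hyadj : (y : Ω) ∈ Algebra.adjoin K' (L : Set Ω) := by
      have h2 : M.toSubalgebra = Algebra.adjoin K' (L : Set Ω) := by
        apply IntermediateField.adjoin_toSubalgebra_of_isAlgebraic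
        intro x hx
        exact (((IsIntegral.of_finite K (⟨x, hx⟩ : L)).map L.val).tower_top (A := K')).isAlgebraic
      rw [← h2]
      exact y.2
    have hy : (y : Ω) ∈ Submodule.span K' (Set.range (L.val ∘ b)) := by
      refine Algebra.adjoin_induction (fun x hx => hspanL x hx) ?_ ?_ ?_ hyadj
      · intro r
        rw [Algebra.algebraMap_eq_smul_one]
        exact Submodule.smul_mem _ r (hspanL 1 L.one_mem)
      · intro a c _ _ ha hc
        exact Submodule.add_mem _ ha hc
      · intro a c _ _ ha hc
        have h3 := Submodule.mul_mem_mul ha hc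
        rw [Submodule.span_mul_span] at h3
        refine Submodule.span_le.mpr ?_ h3
        rintro _ ⟨s, hs, t, ht, rfl⟩
        obtain ⟨i, rfl⟩ := hs
        obtain ⟨j, rfl⟩ := ht
        exact hspanL _ (mul_mem (b i).2 (b j).2)
    have hrange : Set.range (L.val ∘ b) = M.val.toLinearMap '' (Set.range m) := by
      rw [← Set.range_comp]
      rfl
    rw [hrange, ← Submodule.map_span] at hy
    obtain ⟨z, hz, hzy⟩ := hy
    have hzz : z = y := Subtype.ext hzy
    rwa [← hzz]
  let bM : Module.Basis (Fin n) K' M := Module.Basis.mk hmli hspanM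
  haveI hfd : FiniteDimensional K' M := bM.finiteDimensional_of_finite
  have hrank : Module.finrank K' M = Module.finrank K L := by
    rw [Module.finrank_eq_card_basis bM, Fintype.card_fin]
  -- the restriction of `σ : Gal(M/K')` to `L` lands in `L`
  have memL : ∀ (σ : M ≃ₐ[K'] M) (x : Ω) (hx : x ∈ L),
      (σ ⟨x, IntermediateField.subset_adjoin K' (L : Set Ω) hx⟩ : Ω) ∈ L := by
    intro σ x hx
    have hint : IsIntegral K x := (IsIntegral.of_finite K (⟨x, hx⟩ : L)).map L.val
    set q := minpoly K x with hq
    have hmp : minpoly K (⟨x, hx⟩ : L) = q :=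
      (minpoly.algebraMap_eq (algebraMap L Ω).injective (⟨x, hx⟩ : L)).symm
    have hqsplits : (q.map (algebraMap K L)).Splits := by
      rw [← hmp]
      exact (IsGalois.to_normal (F := K) (E := L)).splits ⟨x, hx⟩
    set x' : M := ⟨x, IntermediateField.subset_adjoin K' (L : Set Ω) hx⟩ with hx'
    have hx0 : Polynomial.aeval x' (q.map (algebraMap K K')) = 0 := by
      have h4 : M.val (Polynomial.aeval x' (q.map (algebraMap K K'))) = 0 := by
        rw [← Polynomial.aeval_algHom_apply M.val x' (q.map (algebraMap K K')),
          Polynomial.aeval_map_algebraMap]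
        exact minpoly.aeval K x
      exact M.val.toRingHom.injective (h4.trans (map_zero M.val.toRingHom).symm)
    have hy : Polynomial.aeval ((σ x' : M) : Ω) q = 0 := by
      have h5 : Polynomial.aeval (σ x') (q.map (algebraMap K K')) = 0 := by
        have h := Polynomial.aeval_algHom_apply (σ : M →ₐ[K'] M) x' (q.map (algebraMap K K'))
        rw [hx0, map_zero] at h
        exact h
      have h6 : Polynomial.aeval ((σ x' : M) : Ω) (q.map (algebraMap K K')) = 0 := by
        have h := Polynomial.aeval_algHom_apply M.val (σ x') (q.map (algebraMap K K'))
        rw [h5, map_zero] at h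
        exact h
      rwa [Polynomial.aeval_map_algebraMap] at h6
    have hmem : ((σ x' : M) : Ω) ∈ q.rootSet Ω :=
      Polynomial.mem_rootSet.mpr ⟨minpoly.ne_zero hint, hy⟩
    rw [← hqsplits.image_rootSet L.val] at hmem
    obtain ⟨z, _, hz⟩ := hmem
    rw [← hz]
    exact z.2
  -- the restriction monoid homomorphism
  let lift : L → M := fun x => ⟨(x : Ω), IntermediateField.subset_adjoin K' (L : Set Ω) x.2⟩
  let f : (M ≃ₐ[K'] M) → (L →ₐ[K] L) := fun σ =>
    { toFun := fun x => ⟨(σ (lift x) : Ω), memL σ x x.2⟩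
      map_one' := by
        apply Subtype.ext
        have h1 : lift 1 = 1 := Subtype.ext rfl
        simp [h1]
      map_mul' := fun x y => by
        apply Subtype.ext
        have h1 : lift (x * y) = lift x * lift y := Subtype.ext rfl
        simp [h1]
      map_zero' := by
        apply Subtype.ext
        have h1 : lift 0 = 0 := Subtype.ext rfl
        simp [h1]
      map_add' := fun x y => by
        apply Subtype.ext
        have h1 : lift (x + y) = lift x + lift y := Subtype.ext rfl
        simp [h1]
      commutes' := fun c => by
        apply Subtype.ext
        have h1 : lift (algebraMap K L c) = algebraMap K' M (algebraMap K K' c) := by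
          apply Subtype.ext
          show algebraMap K Ω c = ((algebraMap K' M (algebraMap K K' c) : M) : Ω)
          rw [show ((algebraMap K' M (algebraMap K K' c) : M) : Ω)
              = algebraMap K' Ω (algebraMap K K' c) from rfl,
            ← IsScalarTower.algebraMap_apply]
        show ((σ (lift (algebraMap K L c)) : M) : Ω) = algebraMap K Ω c
        rw [h1, σ.commutes]
        show algebraMap K' Ω (algebraMap K K' c) = algebraMap K Ω c
        rw [← IsScalarTower.algebraMap_apply] }
  have hfapply : ∀ (σ : M ≃ₐ[K'] M) (x : L), ((f σ x : L) : Ω) = ((σ (lift x) : M) : Ω) :=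
    fun σ x => rfl
  haveI : Algebra.IsAlgebraic K L := Algebra.IsAlgebraic.of_finite K L
  let r : (M ≃ₐ[K'] M) →* (L ≃ₐ[K] L) :=
    { toFun := fun σ => AlgEquiv.ofBijective (f σ) (Algebra.IsAlgebraic.algHom_bijective (f σ))
      map_one' := by
        refine AlgEquiv.ext fun x => Subtype.ext ?_
        rfl
      map_mul' := fun σ τ => by
        refine AlgEquiv.ext fun x => Subtype.ext ?_
        have h1 : (τ (lift x)).1 = (lift (f τ x)).1 := rfl
        have h2 : τ (lift x) = lift (f τ x) := Subtype.ext h1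
        exact congrArg (fun z : M => (z : Ω)) (congrArg σ h2) }
  have hrapply : ∀ (σ : M ≃ₐ[K'] M) (x : L), ((r σ x : L) : Ω) = ((σ (lift x) : M) : Ω) :=
    fun σ x => rfl
  have hinj : Function.Injective r := by
    intro σ τ h
    have hagree : ∀ i, σ (m i) = τ (m i) := by
      intro i
      apply Subtype.ext
      have h1 := congrArg (fun (e : L ≃ₐ[K] L) => ((e (b i) : L) : Ω)) h
      simpa only [hrapply] using h1
    have heq : Set.EqOn (σ.toLinearMap (R := K')) (τ.toLinearMap (R := K')) (Set.range m) := by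
      rintro _ ⟨i, rfl⟩
      exact hagree i
    have h2 := LinearMap.eqOn_span' heq
    apply AlgEquiv.ext
    intro y
    exact h2 (hspanM trivial)
  have hcard : Fintype.card (M ≃ₐ[K'] M) = Fintype.card (L ≃ₐ[K] L) := by
    rw [← Nat.card_eq_fintype_card, ← Nat.card_eq_fintype_card, IsGalois.card_aut_eq_finrank, IsGalois.card_aut_eq_finrank, hrank]
  have hbij : Function.Bijective r :=
    (Fintype.bijective_iff_injective_and_card r).mpr ⟨hinj, hcard⟩
  exact ⟨inferInstance, inferInstance, hrank,
    MulEquiv.ofBijective r hbij, fun σ x => hrapply σ x⟩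
end

section
/- Let G and H be groups, K ≤ G × H a subgroup, and let π₁ : K → G and π₂ : K → H be the projection homomorphisms. If the kernel of π₁ is finite and contained in the center of K, and C is the centralizer in H of π₂(ker π₁), then π₂(ker π₁) is a finite normal subgroup of C, and the set {(g, h·π₂(ker π₁)) : (g,h) ∈ K, h ∈ C} defines a subgroup of G × (C/π₂(ker π₁)) whose projection to G has trivial intersection with the corresponding copy of ker π₁. -/
/-- Let `K ≤ G × H` with projections `π₁, π₂`. If `ker π₁` is finite and central in `K`,
and `C` is the centralizer in `H` of `π₂(ker π₁)`, then `π₂(ker π₁)` is a finite normal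
subgroup of `C`, and `{(g, h·π₂(ker π₁)) : (g,h) ∈ K, h ∈ C}` is a subgroup of
`G × C/π₂(ker π₁)` meeting the copy of `ker π₁` trivially. -/
theorem stmt15 {G H : Type*} [Group G] [Group H] (K : Subgroup (G × H))
    (π₁ : ↥K →* G) (π₂ : ↥K →* H)
    (hπ₁ : ∀ x : K, π₁ x = (x : G × H).1) (hπ₂ : ∀ x : K, π₂ x = (x : G × H).2)
    (hfin : Finite π₁.ker) (hcent : (π₁.ker : Subgroup ↥K) ≤ Subgroup.center ↥K) :
    letI N : Subgroup H := Subgroup.map π₂ π₁.ker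
    letI C : Subgroup H := Subgroup.centralizer (N : Set H)
    Finite N ∧
    ∃ _hnormal : (N.subgroupOf C).Normal,
      ∃ K₂ : Subgroup (G × (C ⧸ N.subgroupOf C)),
        (K₂ : Set (G × (C ⧸ N.subgroupOf C))) =
          {p | ∃ (g : G) (h : H) (hgh : (g, h) ∈ K) (hC : h ∈ C),
            p = (g, QuotientGroup.mk (⟨h, hC⟩ : C))} ∧
        ∀ q : C ⧸ N.subgroupOf C, (1, q) ∈ K₂ → q = 1 := by
  set N : Subgroup H := Subgroup.map π₂ π₁.ker with hN
  set C : Subgroup H := Subgroup.centralizer (N : Set H) with hC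
  -- every second coordinate of an element of K centralizes N
  have hmem : ∀ x : ↥K, (x : G × H).2 ∈ C := by
    intro x
    rw [Subgroup.mem_centralizer_iff]
    rintro n ⟨k, hk, rfl⟩
    have hc := hcent hk
    rw [Subgroup.mem_center_iff] at hc
    have := congrArg (fun y : ↥K => (y : G × H).2) (hc x)
    simpa [hπ₂] using this.symm
  -- Finiteness of N
  have hNfin : Finite N := by
    have : Finite (π₂ '' (π₁.ker : Set ↥K)) := Set.Finite.image _ (Set.toFinite _)
    exact this
  have hnorm : (N.subgroupOf C).Normal := by
    constructor
    intro n hn g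
    rw [Subgroup.mem_subgroupOf] at hn ⊢
    have hg : (g : H) ∈ Subgroup.centralizer (N : Set H) := g.2
    rw [Subgroup.mem_centralizer_iff] at hg
    have hcomm := hg (n : H) hn
    have : ((g * n * g⁻¹ : C) : H) = (n : H) := by
      push_cast
      rw [← hcomm]
      group
    rw [this]; exact hn
  refine ⟨hNfin, hnorm, ?_⟩
  · have hkermem : ∀ x : ↥K, (x : G × H).1 = 1 → (x : G × H).2 ∈ N := by
      intro x hx
      exact Subgroup.mem_map.2 ⟨x, by rw [MonoidHom.mem_ker, hπ₁, hx], hπ₂ x⟩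
    let f : ↥K →* G × (C ⧸ N.subgroupOf C) :=
      { toFun := fun x => ((x : G × H).1, QuotientGroup.mk (⟨(x : G × H).2, hmem x⟩ : C))
        map_one' := by
          simp only [OneMemClass.coe_one, Prod.fst_one, Prod.snd_one]
          refine Prod.ext rfl ?_
          exact congrArg QuotientGroup.mk rfl
        map_mul' := by
          intro x y
          refine Prod.ext rfl ?_
          exact congrArg QuotientGroup.mk rfl }
    refine ⟨f.range, ?_, ?_⟩
    · ext p
      simp only [MonoidHom.coe_range, Set.mem_range, Set.mem_setOf_eq]
      constructor
      · rintro ⟨x, rfl⟩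
        exact ⟨(x : G × H).1, (x : G × H).2, by simpa using x.2, hmem x, rfl⟩
      · rintro ⟨g, h, hgh, hC, rfl⟩
        exact ⟨⟨(g, h), hgh⟩, rfl⟩
    · intro q hq
      obtain ⟨x, hx⟩ := hq
      have h1 : (x : G × H).1 = 1 := congrArg Prod.fst hx
      have h2 : QuotientGroup.mk (⟨(x : G × H).2, hmem x⟩ : C) = q := congrArg Prod.snd hx
      rw [← h2]
      rw [QuotientGroup.eq_one_iff, Subgroup.mem_subgroupOf]
      exact hkermem x h1
end
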